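/- Let X = [0,1]² ⊆ ℝ² and define f : X → ℝ by f(x₁,x₂) = 2x₁x₂/(x₁² + x₂²) for (x₁,x₂) ≠ (0,0) and f(0,0) = 1. Let R = {(x,y) ∈ X × X : f(x) ≤ f(y)}. Then R is complete and transitive, but R is not mixture-continuous: there exist x,y,z ∈ X such that the set {λ ∈ [0,1] : λ·x + (1−λ)·y ∈ R⁻¹(z)} is not closed in [0,1] (in particular one may take x = (0,0), y = (1,0), z = (1,0)). -/

import Mathlib

open Set

/-- The transpose `R⁻¹ = {(x,y) : (y,x) ∈ R}` of a relation. -/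
def transp {α : Type} (R : Set (α × α)) : Set (α × α) := {p | (p.2, p.1) ∈ R}

/-- The upper section `R(x) = {y : (x,y) ∈ R}`. -/
def upSec {α : Type} (R : Set (α × α)) (x : α) : Set α := {y | (x, y) ∈ R}

/-- The lower section `R⁻¹(x) = {y : (y,x) ∈ R}`. -/
def lowSec {α : Type} (R : Set (α × α)) (x : α) : Set α := {y | (y, x) ∈ R}

/-- The Gale–Pomatto style function of Example 1. -/
noncomputable def gpF (p : ℝ × ℝ) : ℝ :=
  if p = (0, 0) then 1 else 2 * p.1 * p.2 / (p.1 ^ 2 + p.2 ^ 2)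

/-- The unit square. -/
def unitSquare : Set (ℝ × ℝ) := Set.Icc (0 : ℝ) 1 ×ˢ Set.Icc (0 : ℝ) 1

/-- The relation induced on the unit square by `gpF`. -/
def gpRel : Set ((ℝ × ℝ) × (ℝ × ℝ)) :=
  {p | p.1 ∈ unitSquare ∧ p.2 ∈ unitSquare ∧ gpF p.1 ≤ gpF p.2}

lemma gp_not_closed :
    ¬ IsClosed {lam : unitInterval |
        (lam : ℝ) • ((0 : ℝ), (0 : ℝ)) + (1 - (lam : ℝ)) • ((1 : ℝ), (0 : ℝ))
          ∈ lowSec gpRel ((1 : ℝ), (0 : ℝ))} := by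
  intro h
  -- the sequence 1 - 1/(n+1) in [0,1]
  have hmem01 : ∀ n : ℕ, (1 - 1 / ((n : ℝ) + 1)) ∈ Set.Icc (0:ℝ) 1 := by
    intro n
    have h1 : (0:ℝ) < (n : ℝ) + 1 := by positivity
    constructor
    · have : 1 / ((n : ℝ) + 1) ≤ 1 := by
        rw [div_le_one h1]; linarith
      linarith
    · have : 0 < 1 / ((n : ℝ) + 1) := by positivity
      linarith
  set seq : ℕ → unitInterval := fun n => ⟨1 - 1 / ((n : ℝ) + 1), hmem01 n⟩ with hseq
  have hlim : Filter.Tendsto seq Filter.atTop (nhds 1) := by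
    rw [tendsto_subtype_rng]
    have : Filter.Tendsto (fun n : ℕ => 1 / ((n : ℝ) + 1)) Filter.atTop (nhds 0) :=
      tendsto_one_div_add_atTop_nhds_zero_nat
    have h2 : Filter.Tendsto (fun n : ℕ => 1 - 1 / ((n : ℝ) + 1)) Filter.atTop (nhds (1 - 0)) :=
      Filter.Tendsto.sub tendsto_const_nhds this
    simpa [hseq] using h2
  have hz : ((1:ℝ), (0:ℝ)) ∈ unitSquare := by
    constructor <;> simp
  have hmemT : ∀ n : ℕ, seq n ∈ {lam : unitInterval |
        (lam : ℝ) • ((0 : ℝ), (0 : ℝ)) + (1 - (lam : ℝ)) • ((1 : ℝ), (0 : ℝ))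
          ∈ lowSec gpRel ((1 : ℝ), (0 : ℝ))} := by
    intro n
    have h1 : (0:ℝ) < 1 / ((n : ℝ) + 1) := by positivity
    simp only [Set.mem_setOf_eq, lowSec, gpRel, hseq]
    have hpt : ((1 - 1 / ((n : ℝ) + 1)) : ℝ) • ((0 : ℝ), (0 : ℝ))
        + (1 - (1 - 1 / ((n : ℝ) + 1))) • ((1 : ℝ), (0 : ℝ))
        = ((1 / ((n : ℝ) + 1)), (0:ℝ)) := by
      simp [Prod.ext_iff]
    rw [hpt]
    refine ⟨⟨⟨le_of_lt h1, ?_⟩, by simp⟩, hz, ?_⟩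
    · rw [div_le_one (by positivity)]; linarith
    · have hne : ((1 / ((n : ℝ) + 1)), (0:ℝ)) ≠ ((0:ℝ), (0:ℝ)) := by
        simp [Prod.ext_iff]; positivity
      have hne2 : ((1:ℝ), (0:ℝ)) ≠ ((0:ℝ), (0:ℝ)) := by
        simp [Prod.ext_iff]
      simp [gpF, hne, hne2]
      rw [if_neg (by positivity)]
  have h1T := h.mem_of_tendsto hlim (Filter.Eventually.of_forall hmemT)
  simp only [Set.mem_setOf_eq, lowSec, gpRel] at h1T
  obtain ⟨-, -, hle⟩ := h1T
  have hpt : ((1 : unitInterval) : ℝ) • ((0 : ℝ), (0 : ℝ))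
      + (1 - ((1 : unitInterval) : ℝ)) • ((1 : ℝ), (0 : ℝ)) = ((0:ℝ), (0:ℝ)) := by
    simp [Prod.ext_iff]
  rw [hpt] at hle
  have hne2 : ((1:ℝ), (0:ℝ)) ≠ ((0:ℝ), (0:ℝ)) := by simp [Prod.ext_iff]
  simp [gpF, hne2] at hle
  linarith

theorem gpRel_complete_transitive_not_mixture_continuous :
    (gpRel ∪ transp gpRel = unitSquare ×ˢ unitSquare) ∧
    (∀ x y z : ℝ × ℝ, (x, y) ∈ gpRel → (y, z) ∈ gpRel → (x, z) ∈ gpRel) ∧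
    (∃ x ∈ unitSquare, ∃ y ∈ unitSquare, ∃ z ∈ unitSquare,
      ¬ IsClosed {lam : unitInterval |
          (lam : ℝ) • x + (1 - (lam : ℝ)) • y ∈ lowSec gpRel z}) ∧
    ¬ IsClosed {lam : unitInterval |
        (lam : ℝ) • ((0 : ℝ), (0 : ℝ)) + (1 - (lam : ℝ)) • ((1 : ℝ), (0 : ℝ))
          ∈ lowSec gpRel ((1 : ℝ), (0 : ℝ))} := by
  refine ⟨?_, ?_, ?_, gp_not_closed⟩
  · ext ⟨x, y⟩
    constructor
    · rintro (⟨hx, hy, -⟩ | ⟨hy, hx, -⟩) <;> exact ⟨hx, hy⟩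
    · rintro ⟨hx, hy⟩
      rcases le_total (gpF x) (gpF y) with h | h
      · exact Or.inl ⟨hx, hy, h⟩
      · exact Or.inr ⟨hy, hx, h⟩
  · rintro x y z ⟨hx, hy, h1⟩ ⟨-, hz, h2⟩
    exact ⟨hx, hz, le_trans h1 h2⟩
  · have h00 : ((0:ℝ), (0:ℝ)) ∈ unitSquare := by constructor <;> simp
    have h10 : ((1:ℝ), (0:ℝ)) ∈ unitSquare := by constructor <;> simp
    exact ⟨_, h00, _, h10, _, h10, gp_not_closed⟩
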